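/- arXiv:1911.12108 — 4 statements merged into one kernel-verified Lean document; each statement's English description precedes it below -/
import Mathlib

section
/- For every positive integer n and every finite weak antichain A in ℤ^n, the size of A is at most the sum of the sizes of its (n−1)-dimensional projections: |A| ≤ Σ_{i=1}^n |π_i(A)|. -/
namespace ProjWA

variable {ι : Type*}

/-- `A ⊆ ℤ^ι` is a weak antichain if it contains no `x, y` with `x i < y i` for every `i`. -/
def IsWeakAntichain [Fintype ι] (A : Finset (ι → ℤ)) : Prop :=
  ∀ x ∈ A, ∀ y ∈ A, ¬ ∀ i, x i < y i

/-- The projection deleting the coordinate `i`. -/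
def projFun [DecidableEq ι] (i : ι) (x : ι → ℤ) : {j : ι // j ≠ i} → ℤ :=
  fun j => x j.1

/-- The image of a finite set under the projection deleting coordinate `i`. -/
def proj [Fintype ι] [DecidableEq ι] (i : ι) (A : Finset (ι → ℤ)) :
    Finset ({j : ι // j ≠ i} → ℤ) :=
  A.image (projFun i)

/-- `gap A = Σ_i |π_i(A)| - |A|`. -/
def gap [Fintype ι] [DecidableEq ι] (A : Finset (ι → ℤ)) : ℤ :=
  (∑ i : ι, ((proj i A).card : ℤ)) - A.card

/-- `X_n`: the set of points of `ℤ_{≥0}^ι` having at least one coordinate equal to zero. -/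
def XSet (ι : Type*) : Set (ι → ℤ) :=
  {x | (∀ i, 0 ≤ x i) ∧ ∃ i, x i = 0}

/-- A down-set in `ℤ_{≥0}^ι`. -/
def IsDownSet (A : Finset (ι → ℤ)) : Prop :=
  ∀ x y : ι → ℤ, (∀ i, 0 ≤ x i) → (∀ i, x i ≤ y i) → y ∈ A → x ∈ A

/-- The `i`-th bottom layer `B_i(A)`. -/
def bottomLayer [Fintype ι] [DecidableEq ι] (i : ι) (A : Finset (ι → ℤ)) : Finset (ι → ℤ) :=
  A.filter fun x => ∀ y ∈ A, (∀ j, j ≠ i → y j = x j) → x i ≤ y i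

/-- The `i`-compression `C_i(A)`: each `x ∈ B_i(A)` is replaced by the point obtained
by setting its `i`-th coordinate to `0`. -/
def compress [Fintype ι] [DecidableEq ι] (i : ι) (A : Finset (ι → ℤ)) : Finset (ι → ℤ) :=
  (A \ bottomLayer i A) ∪ (bottomLayer i A).image fun x => Function.update x i 0

/-- `layersRest A k = A \ (A_1 ∪ ⋯ ∪ A_k)` where `A_i` are the layers of `A`. -/
def layersRest {n : ℕ} (A : Finset (Fin n → ℤ)) : ℕ → Finset (Fin n → ℤ)
  | 0 => A
  | k + 1 =>
      layersRest A k \ (if h : k < n then bottomLayer ⟨k, h⟩ (layersRest A k) else ∅)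

/-- The layers `A_1, …, A_n` of `A`, defined by `A_i = B_i(A \ (A_1 ∪ ⋯ ∪ A_{i-1}))`. -/
def layer {n : ℕ} (A : Finset (Fin n → ℤ)) (i : Fin n) : Finset (Fin n → ℤ) :=
  bottomLayer i (layersRest A i.1)

/-- `compressUpTo A k = C_k(C_{k-1}(⋯(C_1(A))⋯))`. -/
def compressUpTo {n : ℕ} (A : Finset (Fin n → ℤ)) : ℕ → Finset (Fin n → ℤ)
  | 0 => A
  | k + 1 =>
      if h : k < n then compress ⟨k, h⟩ (compressUpTo A k) else compressUpTo A k

/-- The complete `i`-compression `𝒞_i(A)`: every line in direction `i` is replaced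
by an initial segment of the same size. -/
def ccompress [Fintype ι] [DecidableEq ι] (i : ι) (A : Finset (ι → ℤ)) : Finset (ι → ℤ) :=
  A.biUnion fun x =>
    (Finset.range ((A.filter fun y => ∀ j, j ≠ i → y j = x j).card)).image fun a : ℕ =>
      Function.update x i (a : ℤ)

/-- The set `T = {i : x i ≠ y i}` of coordinates where `x` and `y` differ. -/
def diffSet [Fintype ι] (x y : ι → ℤ) : Finset ι :=
  Finset.univ.filter fun i => x i ≠ y i

/-- The maximum value of `x` on a finite set of coordinates (`⊥` if the set is empty). -/
def maxOn (s : Finset ι) (x : ι → ℤ) : WithBot ℤ :=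
  (s.image x).max

/-- The largest coordinate in `s` at which `x` attains its maximum over `s`. -/
def argmaxOn [LinearOrder ι] (s : Finset ι) (x : ι → ℤ) : WithBot ι :=
  (s.filter fun i => (x i : WithBot ℤ) = maxOn s x).max

/-- The balanced order: with `T = {i : x i ≠ y i}`, `x < y` iff the maximum of `x` on `T` is
smaller than that of `y` on `T`, or they are equal and the largest index where `x` attains
this maximum on `T` is smaller than the corresponding index for `y`. -/
def balancedLT [Fintype ι] [LinearOrder ι] (x y : ι → ℤ) : Prop :=
  x ≠ y ∧
    (maxOn (diffSet x y) x < maxOn (diffSet x y) y ∨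
      (maxOn (diffSet x y) x = maxOn (diffSet x y) y ∧
        argmaxOn (diffSet x y) x < argmaxOn (diffSet x y) y))

/-- `I` is an initial segment of the balanced order on `X_ι`. -/
def IsInitSeg [Fintype ι] [LinearOrder ι] (I : Finset (ι → ℤ)) : Prop :=
  ↑I ⊆ XSet ι ∧ ∀ x ∈ I, ∀ y ∈ XSet ι, balancedLT y x → y ∈ I

/-- `S(A) = {x ∈ ℤ_{>0}^ι : replacing any one coordinate of x by 0 gives an element of A}`. -/
def SSet [DecidableEq ι] (A : Finset (ι → ℤ)) : Set (ι → ℤ) :=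
  {x | (∀ k, 0 < x k) ∧ ∀ k, Function.update x k 0 ∈ A}

/-- Insert the value `a` at position `i`. -/
def insertAt [DecidableEq ι] (i : ι) (a : ℤ) (x : {j : ι // j ≠ i} → ℤ) : ι → ℤ :=
  fun j => if h : j = i then a else x ⟨j, h⟩

/-- `L^i_a(A)`: the elements of `X_{n-1}` which, after inserting the value `a` at
position `i`, give elements of `A`. -/
def Lset [Fintype ι] [DecidableEq ι] (i : ι) (a : ℤ) (A : Finset (ι → ℤ)) :
    Finset ({j : ι // j ≠ i} → ℤ) :=
  (proj i (A.filter fun x => x i = a)).filter fun x' => ∃ j, x' j = 0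

/-- `K^i(A)`: the elements of `ℤ_{>0}^{n-1}` which, after inserting a `0` at position `i`,
give elements of `A`. -/
def Kset [Fintype ι] [DecidableEq ι] (i : ι) (A : Finset (ι → ℤ)) :
    Finset ({j : ι // j ≠ i} → ℤ) :=
  (proj i (A.filter fun x => x i = 0)).filter fun x' => ∀ j, 0 < x' j

/-- `K` is an initial segment of `ℤ_{>0}^{n-1}` with respect to the order `≺` defined by
`x ≺ y` iff inserting a `0` at position `i` into `x` gives a smaller element of `X_n`
(in the balanced order) than inserting a `0` at position `i` into `y`. -/
def IsKInitSeg [Fintype ι] [LinearOrder ι] (i : ι) (K : Finset ({j : ι // j ≠ i} → ℤ)) :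
    Prop :=
  (∀ x ∈ K, ∀ j, 0 < x j) ∧
    ∀ x ∈ K, ∀ y : {j : ι // j ≠ i} → ℤ, (∀ j, 0 < y j) →
      balancedLT (insertAt i 0 y) (insertAt i 0 x) → y ∈ K

/-- `A_N = {x ∈ ℤ^n : 0 ≤ x_j ≤ N-1 for all j, and x_i = 0 for some i}`. -/
def ANbox (n N : ℕ) : Finset (Fin n → ℤ) :=
  (Fintype.piFinset fun _ : Fin n => (Finset.range N).image fun k : ℕ => (k : ℤ)).filter
    fun x => ∃ i, x i = 0

/-- `g(n,m)`: the minimum of `gap A` over weak antichains `A` of size `m` in `ℤ^n`. -/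
noncomputable def gMin (n m : ℕ) : ℝ :=
  sInf {r : ℝ | ∃ A : Finset (Fin n → ℤ), IsWeakAntichain A ∧ A.card = m ∧ (gap A : ℝ) = r}


lemma layersRest_subset {n : ℕ} (A : Finset (Fin n → ℤ)) : ∀ k, layersRest A k ⊆ A
  | 0 => subset_rfl
  | k + 1 => Finset.sdiff_subset.trans (layersRest_subset A k)

/-- Descent lemma: any point surviving the first `k` layer removals admits a point of `A`
strictly below it in the first `k` coordinates and equal elsewhere. -/
lemma descent {n : ℕ} (A : Finset (Fin n → ℤ)) :
    ∀ k, ∀ x ∈ layersRest A k, ∃ z ∈ A,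
      (∀ i : Fin n, i.1 < k → z i < x i) ∧ (∀ i : Fin n, k ≤ i.1 → z i = x i) := by
  intro k
  induction k with
  | zero =>
    intro x hx
    exact ⟨x, layersRest_subset A 0 hx, fun i h => absurd h (Nat.not_lt_zero _),
      fun i _ => rfl⟩
  | succ k ih =>
    intro x hx
    by_cases h : k < n
    · rw [layersRest, dif_pos h, Finset.mem_sdiff] at hx
      obtain ⟨hx1, hx2⟩ := hx
      simp only [bottomLayer, Finset.mem_filter, hx1, true_and] at hx2
      push_neg at hx2
      obtain ⟨y, hy, hagree, hlt⟩ := hx2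
      obtain ⟨z, hz, hlt', heq'⟩ := ih y hy
      refine ⟨z, hz, ?_, ?_⟩
      · intro i hi
        rcases Nat.lt_or_ge i.1 k with h' | h'
        · have : y i = x i := hagree i (by simp only [ne_eq, Fin.ext_iff]; omega)
          exact lt_of_lt_of_le (hlt' i h') (le_of_eq this)
        · have hik : i = ⟨k, h⟩ := Fin.ext (show i.1 = k by omega)
          have : z i = y i := heq' i (by omega)
          rw [this, hik]
          exact hlt
      · intro i hi
        have h1 : z i = y i := heq' i (by omega)
        have h2 : y i = x i := hagree i (by simp only [ne_eq, Fin.ext_iff]; omega)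
        rw [h1, h2]
    · rw [layersRest, dif_neg h, Finset.sdiff_empty] at hx
      obtain ⟨z, hz, hlt', heq'⟩ := ih x hx
      refine ⟨z, hz, fun i hi => hlt' i (by have := i.2; omega),
        fun i hi => heq' i (by omega)⟩

lemma bottomLayer_subset {n : ℕ} (i : Fin n) (S : Finset (Fin n → ℤ)) :
    bottomLayer i S ⊆ S := fun x hx => by
  simp only [bottomLayer, Finset.mem_filter] at hx
  exact hx.1

lemma bottom_card_le {n : ℕ} (i : Fin n) (S A : Finset (Fin n → ℤ)) (hS : S ⊆ A) :
    (bottomLayer i S).card ≤ (proj i A).card := by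
  have hinj : Set.InjOn (projFun i) (bottomLayer i S) := by
    intro x hx y hy hxy
    have hag : ∀ j, j ≠ i → x j = y j := fun j hj => congrFun hxy ⟨j, hj⟩
    simp only [bottomLayer, Finset.coe_filter, Set.mem_setOf_eq] at hx hy
    have h1 := hx.2 y hy.1 (fun j hj => (hag j hj).symm)
    have h2 := hy.2 x hx.1 (fun j hj => hag j hj)
    funext j
    by_cases hj : j = i
    · subst hj; exact le_antisymm h1 h2
    · exact hag j hj
  calc (bottomLayer i S).card = ((bottomLayer i S).image (projFun i)).card :=
        (Finset.card_image_of_injOn hinj).symm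
    _ ≤ (proj i A).card :=
        Finset.card_le_card
          (Finset.image_subset_image ((bottomLayer_subset i S).trans hS))

lemma card_bound {n : ℕ} (A : Finset (Fin n → ℤ)) :
    ∀ k, A.card ≤ (layersRest A k).card
      + ∑ i : Fin n, (if i.1 < k then (proj i A).card else 0) := by
  intro k
  induction k with
  | zero => simp [layersRest]
  | succ k ih =>
    by_cases h : k < n
    · have hB : bottomLayer ⟨k, h⟩ (layersRest A k) ⊆ layersRest A k :=
        bottomLayer_subset _ _
      have hBcard := Finset.card_le_card hB
      have hbc := bottom_card_le ⟨k, h⟩ (layersRest A k) A (layersRest_subset A k)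
      have h1 : (layersRest A k).card ≤ (layersRest A (k+1)).card + (proj ⟨k, h⟩ A).card := by
        rw [layersRest, dif_pos h, Finset.card_sdiff_of_subset hB]
        omega
      have hsum : ∑ i : Fin n, (if i.1 < k + 1 then (proj i A).card else 0)
          = (∑ i : Fin n, if i.1 < k then (proj i A).card else 0) + (proj ⟨k, h⟩ A).card := by
        have hpt : ∀ i : Fin n, (if i.1 < k + 1 then (proj i A).card else 0)
            = (if i.1 < k then (proj i A).card else 0)
              + (if i = ⟨k, h⟩ then (proj i A).card else 0) := by
          intro i
          simp only [Fin.ext_iff]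
          split_ifs <;> omega
        rw [Finset.sum_congr rfl (fun i _ => hpt i), Finset.sum_add_distrib]
        congr 1
        simp
      omega
    · rw [layersRest, dif_neg h, Finset.sdiff_empty]
      have hsum : ∑ i : Fin n, (if i.1 < k + 1 then (proj i A).card else 0)
          = ∑ i : Fin n, (if i.1 < k then (proj i A).card else 0) :=
        Finset.sum_congr rfl fun i _ => by
          have := i.2; rw [if_pos (by omega), if_pos (by omega)]
      omega

/-- For every positive `n`, every finite weak antichain `A ⊆ ℤ^n` satisfies
`|A| ≤ Σ_{i=1}^n |π_i(A)|`. -/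
theorem weakAntichain_card_le_sum_proj (n : ℕ) (hn : 0 < n)
    (A : Finset (Fin n → ℤ)) (hA : IsWeakAntichain A) :
    A.card ≤ ∑ i : Fin n, (proj i A).card := by
  have hrest : layersRest A n = ∅ := by
    rw [← Finset.not_nonempty_iff_eq_empty]
    rintro ⟨x, hx⟩
    obtain ⟨z, hz, hlt, -⟩ := descent A n x hx
    exact hA z hz x (layersRest_subset A n hx) (fun i => hlt i i.2)
  have hcb := card_bound A n
  rw [hrest] at hcb
  simp only [Finset.card_empty, zero_add] at hcb
  calc A.card ≤ ∑ i : Fin n, (if i.1 < n then (proj i A).card else 0) := hcb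
    _ = ∑ i : Fin n, (proj i A).card :=
        Finset.sum_congr rfl fun i _ => if_pos i.2

end ProjWA
end

section
/- If A is a finite weak antichain in ℤ^n, then there is a set A' ⊆ X_n of the same size with |π_i(A')| ≤ |π_i(A)| for each i, such that A' is a down-set: whenever x, y ∈ ℤ_{≥0}^n with x_i ≤ y_i for all i and y ∈ A', then x ∈ A'. (In particular, A' is itself a weak antichain.) -/
namespace ProjWA
set_option linter.unusedSectionVars false

variable {ι : Type*}

/-! ### Auxiliary lemmas for Statement 7 -/

section Generic

/-- Summing over fibers of a map. -/
lemma sum_fib {α β M : Type*} [DecidableEq α] [DecidableEq β] [AddCommMonoid M]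
    (s : Finset α) (g : α → β) (f : α → M) :
    ∑ b ∈ s.image g, ∑ a ∈ s.filter (fun a => g a = b), f a = ∑ a ∈ s, f a := by
  have hU : (s.image g).biUnion (fun b => s.filter fun a => g a = b) = s := by
    ext a
    simp only [Finset.mem_biUnion, Finset.mem_image, Finset.mem_filter]
    constructor
    · rintro ⟨b, _, h, _⟩; exact h
    · intro h; exact ⟨g a, ⟨a, h, rfl⟩, h, rfl⟩
  have hdisj : ∀ b₁ ∈ s.image g, ∀ b₂ ∈ s.image g, b₁ ≠ b₂ →
      Disjoint (s.filter fun a => g a = b₁) (s.filter fun a => g a = b₂) := by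
    intro b₁ _ b₂ _ hne
    refine Finset.disjoint_left.2 fun a ha ha' => hne ?_
    rw [← (Finset.mem_filter.1 ha).2, ← (Finset.mem_filter.1 ha').2]
  conv_rhs => rw [← hU]
  rw [Finset.sum_biUnion hdisj]

/-- Comparing cardinalities plane-by-plane. -/
lemma card_le_of_planes {β γ : Type*} [DecidableEq β] [DecidableEq γ]
    (C S : Finset β) (K : β → γ)
    (h1 : C.image K ⊆ S.image K)
    (h2 : ∀ r ∈ C.image K,
      (C.filter fun b => K b = r).card ≤ (S.filter fun b => K b = r).card) :
    C.card ≤ S.card := by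
  calc C.card = ∑ r ∈ C.image K, (C.filter fun b => K b = r).card :=
        Finset.card_eq_sum_card_image K C
    _ ≤ ∑ r ∈ C.image K, (S.filter fun b => K b = r).card := Finset.sum_le_sum h2
    _ ≤ ∑ r ∈ S.image K, (S.filter fun b => K b = r).card :=
        Finset.sum_le_sum_of_subset h1
    _ = S.card := (Finset.card_eq_sum_card_image K S).symm

/-- A finite set of `c` naturals has sum at least `0 + 1 + ⋯ + (c-1)`, strictly more
unless it equals `range c`. -/
lemma sum_range_card_le : ∀ (c : ℕ) (V : Finset ℕ), V.card = c →
    ((∑ a ∈ Finset.range c, a) ≤ ∑ a ∈ V, a ∧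
      (V ≠ Finset.range c → (∑ a ∈ Finset.range c, a) < ∑ a ∈ V, a)) := by
  intro c
  induction c with
  | zero =>
    intro V hV
    rw [Finset.card_eq_zero] at hV
    subst hV
    simp
  | succ c ih =>
    intro V hV
    have hne : V.Nonempty := Finset.card_pos.mp (by omega)
    have hMV : V.max' hne ∈ V := V.max'_mem hne
    set M := V.max' hne with hM
    have hcard' : (V.erase M).card = c := by
      rw [Finset.card_erase_of_mem hMV, hV]
      omega

    have hsub : V ⊆ Finset.range (M + 1) :=
      fun a ha => Finset.mem_range.2 (Nat.lt_succ_of_le (V.le_max' a ha))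
    have hMc : c ≤ M := by
      have := Finset.card_le_card hsub
      rw [hV, Finset.card_range] at this
      omega
    have ihe := ih (V.erase M) hcard'
    have hsplit : M + ∑ a ∈ V.erase M, a = ∑ a ∈ V, a :=
      Finset.add_sum_erase V (fun a => a) hMV
    rw [Finset.sum_range_succ]
    constructor
    · omega
    · intro hne'
      by_cases hMc' : M = c
      · have hVe : V.erase M ≠ Finset.range c := by
          intro h
          apply hne'
          have hins : V = insert M (V.erase M) := (Finset.insert_erase hMV).symm
          rw [hins, h, hMc', Finset.range_add_one]
        have := ihe.2 hVe
        omega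
      · have := ihe.1
        omega

end Generic

section CComp

variable [Fintype ι] [DecidableEq ι]

/-- The line (fiber) through `x` in direction `i`. -/
def fib (i : ι) (A : Finset (ι → ℤ)) (x : ι → ℤ) : Finset (ι → ℤ) :=
  A.filter fun y => ∀ j, j ≠ i → y j = x j

lemma fib_congr {i : ι} {A : Finset (ι → ℤ)} {x z : ι → ℤ}
    (h : ∀ j, j ≠ i → z j = x j) : fib i A z = fib i A x := by
  unfold fib
  apply Finset.filter_congr
  intro y _
  constructor
  · intro hy j hj; rw [hy j hj, h j hj]
  · intro hy j hj; rw [hy j hj, ← h j hj]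

lemma projFun_eq_iff {i : ι} {x y : ι → ℤ} :
    projFun i x = projFun i y ↔ ∀ j, j ≠ i → x j = y j := by
  constructor
  · intro h j hj; exact congrFun h ⟨j, hj⟩
  · intro h; funext j; exact h j.1 j.2

lemma projFun_update (i : ι) (x : ι → ℤ) (a : ℤ) :
    projFun i (Function.update x i a) = projFun i x := by
  funext j
  exact Function.update_of_ne j.2 a x

lemma mem_ccompress {i : ι} {A : Finset (ι → ℤ)} {z : ι → ℤ} :
    z ∈ ccompress i A ↔
      (∃ x ∈ A, ∀ j, j ≠ i → z j = x j) ∧ 0 ≤ z i ∧ z i < (fib i A z).card := by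
  unfold ccompress
  simp only [Finset.mem_biUnion, Finset.mem_image, Finset.mem_range]
  constructor
  · rintro ⟨x, hx, a, ha, rfl⟩
    have hoff : ∀ j, j ≠ i → Function.update x i (a : ℤ) j = x j :=
      fun j hj => Function.update_of_ne hj _ _
    refine ⟨⟨x, hx, hoff⟩, ?_, ?_⟩
    · rw [Function.update_self]; exact Int.ofNat_nonneg a
    · rw [Function.update_self, fib_congr hoff]
      exact_mod_cast ha
  · rintro ⟨⟨x, hx, hzx⟩, h0, hlt⟩
    have hfz : fib i A z = fib i A x := fib_congr hzx
    rw [hfz] at hlt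
    refine ⟨x, hx, (z i).toNat, ?_, ?_⟩
    · show (z i).toNat < (fib i A x).card
      omega
    funext j
    by_cases hj : j = i
    · subst hj; rw [Function.update_self, Int.toNat_of_nonneg h0]
    · rw [Function.update_of_ne hj]; exact (hzx j hj).symm

lemma self_mem_fib {i : ι} {A : Finset (ι → ℤ)} {x : ι → ℤ} (hx : x ∈ A) :
    x ∈ fib i A x :=
  Finset.mem_filter.2 ⟨hx, fun _ _ => rfl⟩

lemma proj_ccompress (i : ι) (A : Finset (ι → ℤ)) :
    proj i (ccompress i A) = proj i A := by
  ext p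
  simp only [proj, Finset.mem_image]
  constructor
  · rintro ⟨z, hz, rfl⟩
    obtain ⟨⟨x, hx, hzx⟩, -, -⟩ := mem_ccompress.1 hz
    refine ⟨x, hx, ?_⟩
    exact (projFun_eq_iff.2 hzx).symm
  · rintro ⟨x, hx, rfl⟩
    refine ⟨Function.update x i 0, ?_, projFun_update ..⟩
    apply mem_ccompress.2
    have hoff : ∀ j, j ≠ i → Function.update x i (0 : ℤ) j = x j :=
      fun j hj => Function.update_of_ne hj _ _
    refine ⟨⟨x, hx, hoff⟩, by rw [Function.update_self], ?_⟩
    rw [Function.update_self, fib_congr hoff]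
    have hpos : 0 < (fib i A x).card := Finset.card_pos.2 ⟨x, self_mem_fib hx⟩
    exact_mod_cast hpos

lemma filtp_eq_fib {i : ι} {A : Finset (ι → ℤ)} {x : ι → ℤ} :
    A.filter (fun y => projFun i y = projFun i x) = fib i A x := by
  unfold fib
  apply Finset.filter_congr
  intro y _
  exact projFun_eq_iff

lemma filtp_ccompress {i : ι} {A : Finset (ι → ℤ)} {x : ι → ℤ} (hx : x ∈ A) :
    (ccompress i A).filter (fun z => projFun i z = projFun i x) =
      (Finset.range (fib i A x).card).image (fun a : ℕ => Function.update x i (a : ℤ)) := by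
  ext z
  simp only [Finset.mem_filter, Finset.mem_image, Finset.mem_range]
  constructor
  · rintro ⟨hz, hpz⟩
    obtain ⟨-, h0, hlt⟩ := mem_ccompress.1 hz
    have hzx : ∀ j, j ≠ i → z j = x j := projFun_eq_iff.1 hpz
    rw [fib_congr hzx] at hlt
    refine ⟨(z i).toNat, by omega, ?_⟩
    funext j
    by_cases hj : j = i
    · subst hj; rw [Function.update_self, Int.toNat_of_nonneg h0]
    · rw [Function.update_of_ne hj]; exact (hzx j hj).symm
  · rintro ⟨a, ha, rfl⟩
    have hoff : ∀ j, j ≠ i → Function.update x i (a : ℤ) j = x j :=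
      fun j hj => Function.update_of_ne hj _ _
    constructor
    · apply mem_ccompress.2
      refine ⟨⟨x, hx, hoff⟩, ?_, ?_⟩
      · rw [Function.update_self]; exact Int.ofNat_nonneg a
      · rw [Function.update_self, fib_congr hoff]; exact_mod_cast ha
    · exact projFun_update ..

lemma updateNat_injOn {i : ι} {x : ι → ℤ} {s : Finset ℕ} :
    Set.InjOn (fun a : ℕ => Function.update x i (a : ℤ)) ↑s := by
  intro a _ b _ hab
  have := congrFun hab i
  simp only [Function.update_self] at this
  exact_mod_cast this

lemma card_filtp_ccompress {i : ι} {A : Finset (ι → ℤ)} {x : ι → ℤ} (hx : x ∈ A) :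
    ((ccompress i A).filter (fun z => projFun i z = projFun i x)).card =
      (fib i A x).card := by
  rw [filtp_ccompress hx, Finset.card_image_of_injOn updateNat_injOn, Finset.card_range]

lemma card_ccompress (i : ι) (A : Finset (ι → ℤ)) :
    (ccompress i A).card = A.card := by
  rw [Finset.card_eq_sum_card_image (projFun i) (ccompress i A),
    Finset.card_eq_sum_card_image (projFun i) A]
  have himg : Finset.image (projFun i) (ccompress i A) = Finset.image (projFun i) A :=
    proj_ccompress i A
  rw [himg]
  apply Finset.sum_congr rfl
  intro p hp
  obtain ⟨x, hx, rfl⟩ := Finset.mem_image.1 hp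
  rw [card_filtp_ccompress hx, ← filtp_eq_fib]

end CComp


section CComp2

variable [Fintype ι] [DecidableEq ι]

lemma proj_ccompress_le {i j : ι} (hij : i ≠ j) (A : Finset (ι → ℤ)) :
    (proj j (ccompress i A)).card ≤ (proj j A).card := by
  classical
  set K : ({l : ι // l ≠ j} → ℤ) → ({l : ι // l ≠ j} → ℤ) :=
    fun q l => if l.1 = i then 0 else q l with hK
  have hKoff : ∀ z w : ι → ℤ, (∀ l, l ≠ i → z l = w l) →
      K (projFun j z) = K (projFun j w) := by
    intro z w h
    funext l
    by_cases hl : l.1 = i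
    · simp only [hK, if_pos hl]
    · simp only [hK, if_neg hl]
      exact h l.1 hl
  apply card_le_of_planes _ _ K
  · intro r hr
    obtain ⟨q, hq, rfl⟩ := Finset.mem_image.1 hr
    obtain ⟨z, hz, rfl⟩ := Finset.mem_image.1 hq
    obtain ⟨⟨x, hx, hzx⟩, -, -⟩ := mem_ccompress.1 hz
    exact Finset.mem_image.2 ⟨projFun j x, Finset.mem_image.2 ⟨x, hx, rfl⟩,
      (hKoff z x hzx).symm⟩
  · intro r hr
    obtain ⟨q0, hq0, hq0r⟩ := Finset.mem_image.1 hr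
    obtain ⟨z0, hz0, rfl⟩ := Finset.mem_image.1 hq0
    obtain ⟨⟨x0, hx0, hz0x0⟩, -, -⟩ := mem_ccompress.1 hz0
    set P : Finset (ι → ℤ) := A.filter (fun x => K (projFun j x) = r) with hP
    have hx0P : x0 ∈ P := Finset.mem_filter.2 ⟨hx0, by rw [← hKoff z0 x0 hz0x0, hq0r]⟩
    have hPne : P.Nonempty := ⟨x0, hx0P⟩
    set m : ℕ := P.sup (fun x => (fib i A x).card) with hm
    have hstep1 : ((proj j (ccompress i A)).filter fun q => K q = r).card ≤
        (Finset.range m).card := by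
      apply Finset.card_le_card_of_injOn (fun q => (q ⟨i, hij⟩).toNat)
      · intro q hq
        obtain ⟨hq1, hq2⟩ := Finset.mem_filter.1 hq
        obtain ⟨z, hz, rfl⟩ := Finset.mem_image.1 hq1
        obtain ⟨⟨x, hx, hzx⟩, h0, hlt⟩ := mem_ccompress.1 hz
        have hxP : x ∈ P := Finset.mem_filter.2 ⟨hx, by rw [← hKoff z x hzx]; exact hq2⟩
        have h1 : (fib i A x).card ≤ m :=
          Finset.le_sup (f := fun x => (fib i A x).card) hxP
        have hfz : fib i A z = fib i A x := fib_congr hzx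
        rw [hfz] at hlt
        have h2 : projFun j z ⟨i, hij⟩ = z i := rfl
        simp only [h2]
        exact Finset.mem_range.2 (by omega)
      · intro q1 hq1 q2 hq2 heq
        rw [Finset.mem_coe, Finset.mem_filter] at hq1 hq2
        obtain ⟨hq1m, hq1r⟩ := hq1
        obtain ⟨hq2m, hq2r⟩ := hq2
        have h01 : 0 ≤ q1 ⟨i, hij⟩ := by
          obtain ⟨z, hz, rfl⟩ := Finset.mem_image.1 hq1m
          exact (mem_ccompress.1 hz).2.1
        have h02 : 0 ≤ q2 ⟨i, hij⟩ := by
          obtain ⟨z, hz, rfl⟩ := Finset.mem_image.1 hq2m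
          exact (mem_ccompress.1 hz).2.1
        funext l
        by_cases hl : l.1 = i
        · have hli : l = ⟨i, hij⟩ := Subtype.ext hl
          have heq' : (q1 ⟨i, hij⟩).toNat = (q2 ⟨i, hij⟩).toNat := heq
          clear heq
          subst hli
          omega
        · have e1 : q1 l = r l := by
            rw [← hq1r]
            simp only [hK, if_neg hl]
          have e2 : q2 l = r l := by
            rw [← hq2r]
            simp only [hK, if_neg hl]
          rw [e1, e2]
    have hstep2 : (Finset.range m).card ≤ ((proj j A).filter fun q => K q = r).card := by
      obtain ⟨xs, hxsP, hxs⟩ := Finset.exists_mem_eq_sup P hPne (fun x => (fib i A x).card)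
      rw [Finset.card_range, hm, hxs]
      apply Finset.card_le_card_of_injOn (projFun j)
      · intro y hy
        obtain ⟨hyA, hyx⟩ := Finset.mem_filter.1 hy
        refine Finset.mem_filter.2 ⟨Finset.mem_image.2 ⟨y, hyA, rfl⟩, ?_⟩
        rw [hKoff y xs hyx]
        exact (Finset.mem_filter.1 hxsP).2
      · intro y1 hy1 y2 hy2 heq
        rw [Finset.mem_coe] at hy1 hy2
        obtain ⟨hy1A, hy1x⟩ := Finset.mem_filter.1 hy1
        obtain ⟨hy2A, hy2x⟩ := Finset.mem_filter.1 hy2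
        funext l
        by_cases hl : l = j
        · subst hl
          rw [hy1x l (Ne.symm hij), hy2x l (Ne.symm hij)]
        · exact congrFun heq ⟨l, hl⟩
    exact le_trans hstep1 hstep2

lemma ccompress_X {i : ι} {A : Finset (ι → ℤ)}
    (hX : ∀ z ∈ A, (∀ l, 0 ≤ z l) ∧ ∃ l, z l = 0) :
    ∀ z ∈ ccompress i A, (∀ l, 0 ≤ z l) ∧ ∃ l, z l = 0 := by
  intro z hz
  obtain ⟨⟨x, hx, hzx⟩, h0, hlt⟩ := mem_ccompress.1 hz
  obtain ⟨hxnn, l0, hl0⟩ := hX x hx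
  refine ⟨?_, ?_⟩
  · intro l
    by_cases hl : l = i
    · subst hl; exact h0
    · rw [hzx l hl]; exact hxnn l
  · by_cases hex : ∃ l, l ≠ i ∧ x l = 0
    · obtain ⟨l, hli, hl⟩ := hex
      exact ⟨l, by rw [hzx l hli, hl]⟩
    · push_neg at hex
      have hxi : x i = 0 := by
        rcases eq_or_ne l0 i with rfl | hne
        · exact hl0
        · exact absurd hl0 (hex l0 hne)
      have hfib : fib i A x ⊆ {x} := by
        intro y hy
        obtain ⟨hyA, hyx⟩ := Finset.mem_filter.1 hy
        obtain ⟨hynn, l1, hl1⟩ := hX y hyA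
        have hyi : y i = 0 := by
          rcases eq_or_ne l1 i with rfl | hne
          · exact hl1
          · exact absurd (by rw [← hyx l1 hne]; exact hl1) (hex l1 hne)
        have hyeq : y = x := by
          funext l
          by_cases hl : l = i
          · subst hl; rw [hyi, hxi]
          · exact hyx l hl
        rw [hyeq]
        exact Finset.mem_singleton_self x
      have hc1 : (fib i A z).card ≤ 1 := by
        have hfz : fib i A z = fib i A x := fib_congr hzx
        rw [hfz]
        exact le_trans (Finset.card_le_card hfib) (by simp)
      exact ⟨i, by omega⟩

/-- The potential function: total sum of all coordinates. -/
def pot (A : Finset (ι → ℤ)) : ℕ := ∑ x ∈ A, ∑ l : ι, (x l).toNat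

lemma pot_ccompress_lt {i : ι} {A : Finset (ι → ℤ)}
    (hnn : ∀ z ∈ A, ∀ l, 0 ≤ z l) (hne : ccompress i A ≠ A) :
    pot (ccompress i A) < pot A := by
  classical
  set f : (ι → ℤ) → ℕ := fun x => ∑ l : ι, (x l).toNat with hf
  have hsplit : ∀ x : ι → ℤ, f x = (x i).toNat + ∑ l ∈ Finset.univ.erase i, (x l).toNat :=
    fun x => (Finset.add_sum_erase Finset.univ (fun l => (x l).toNat) (Finset.mem_univ i)).symm
  -- per-fiber computations
  have hAfib : ∀ x ∈ A, ∑ y ∈ A.filter (fun y => projFun i y = projFun i x), f y =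
      (∑ v ∈ (fib i A x).image (fun y => (y i).toNat), v) +
        (fib i A x).card * (∑ l ∈ Finset.univ.erase i, (x l).toNat) := by
    intro x hx
    rw [filtp_eq_fib]
    have hinj : ∀ y1 ∈ fib i A x, ∀ y2 ∈ fib i A x, (y1 i).toNat = (y2 i).toNat → y1 = y2 := by
      intro y1 hy1 y2 hy2 h
      obtain ⟨hy1A, hy1x⟩ := Finset.mem_filter.1 hy1
      obtain ⟨hy2A, hy2x⟩ := Finset.mem_filter.1 hy2
      have h1 := hnn y1 hy1A i
      have h2 := hnn y2 hy2A i
      funext l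
      by_cases hl : l = i
      · subst hl; omega
      · rw [hy1x l hl, hy2x l hl]
    rw [Finset.sum_image hinj]
    have : ∀ y ∈ fib i A x, f y = (y i).toNat + ∑ l ∈ Finset.univ.erase i, (x l).toNat := by
      intro y hy
      obtain ⟨hyA, hyx⟩ := Finset.mem_filter.1 hy
      rw [hsplit y]
      congr 1
      apply Finset.sum_congr rfl
      intro l hl
      rw [hyx l (Finset.mem_erase.1 hl).1]
    rw [Finset.sum_congr rfl this, Finset.sum_add_distrib, Finset.sum_const, smul_eq_mul]
  have hCfib : ∀ x ∈ A, ∑ z ∈ (ccompress i A).filter (fun z => projFun i z = projFun i x), f z =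
      (∑ a ∈ Finset.range (fib i A x).card, a) +
        (fib i A x).card * (∑ l ∈ Finset.univ.erase i, (x l).toNat) := by
    intro x hx
    rw [filtp_ccompress hx]
    have hinj : ∀ a1 ∈ Finset.range (fib i A x).card, ∀ a2 ∈ Finset.range (fib i A x).card,
        Function.update x i (a1 : ℤ) = Function.update x i (a2 : ℤ) → a1 = a2 := by
      intro a1 _ a2 _ h
      have := congrFun h i
      simp only [Function.update_self] at this
      exact_mod_cast this
    rw [Finset.sum_image hinj]
    have : ∀ a ∈ Finset.range (fib i A x).card,
        f (Function.update x i (a : ℤ)) = a + ∑ l ∈ Finset.univ.erase i, (x l).toNat := by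
      intro a _
      rw [hsplit]
      congr 1
      · rw [Function.update_self]; exact Int.toNat_natCast a
      · apply Finset.sum_congr rfl
        intro l hl
        rw [Function.update_of_ne (Finset.mem_erase.1 hl).1]
    rw [Finset.sum_congr rfl this, Finset.sum_add_distrib, Finset.sum_const, smul_eq_mul,
      Finset.card_range]
  have hcardV : ∀ x ∈ A, ((fib i A x).image (fun y => (y i).toNat)).card = (fib i A x).card := by
    intro x hx
    apply Finset.card_image_of_injOn
    intro y1 hy1 y2 hy2 h
    rw [Finset.mem_coe] at hy1 hy2
    obtain ⟨hy1A, hy1x⟩ := Finset.mem_filter.1 hy1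
    obtain ⟨hy2A, hy2x⟩ := Finset.mem_filter.1 hy2
    have h1 := hnn y1 hy1A i
    have h2 := hnn y2 hy2A i
    funext l
    by_cases hl : l = i
    · subst hl; simp only at h; omega
    · rw [hy1x l hl, hy2x l hl]
  -- find a witness where the fiber is not an initial segment
  have hxw : ∃ x ∈ A, x ∉ ccompress i A := by
    by_contra h
    push_neg at h
    exact hne ((Finset.eq_of_subset_of_card_le h (le_of_eq (card_ccompress i A))).symm)
  obtain ⟨xw, hxwA, hxwC⟩ := hxw
  have hVw : (fib i A xw).image (fun y => (y i).toNat) ≠ Finset.range (fib i A xw).card := by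
    intro hV
    apply hxwC
    apply mem_ccompress.2
    refine ⟨⟨xw, hxwA, fun _ _ => rfl⟩, hnn xw hxwA i, ?_⟩
    have hmem : (xw i).toNat ∈ (fib i A xw).image (fun y => (y i).toNat) :=
      Finset.mem_image.2 ⟨xw, self_mem_fib hxwA, rfl⟩
    rw [hV, Finset.mem_range] at hmem
    have := hnn xw hxwA i
    omega
  -- assemble
  have hpotA : pot A = ∑ p ∈ A.image (projFun i),
      ∑ y ∈ A.filter (fun y => projFun i y = p), f y := (sum_fib A (projFun i) f).symm
  have hpotC : pot (ccompress i A) = ∑ p ∈ A.image (projFun i),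
      ∑ z ∈ (ccompress i A).filter (fun z => projFun i z = p), f z := by
    have himg : (ccompress i A).image (projFun i) = A.image (projFun i) := proj_ccompress i A
    rw [pot, ← sum_fib (ccompress i A) (projFun i) f, himg]
  rw [hpotA, hpotC]
  apply Finset.sum_lt_sum
  · intro p hp
    obtain ⟨x, hx, rfl⟩ := Finset.mem_image.1 hp
    rw [hAfib x hx, hCfib x hx]
    have h1 := (sum_range_card_le (fib i A x).card
      ((fib i A x).image (fun y => (y i).toNat)) (hcardV x hx)).1
    exact Nat.add_le_add_right h1 _
  · refine ⟨projFun i xw, Finset.mem_image.2 ⟨xw, hxwA, rfl⟩, ?_⟩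
    rw [hAfib xw hxwA, hCfib xw hxwA]
    have h1 := (sum_range_card_le (fib i A xw).card
      ((fib i A xw).image (fun y => (y i).toNat)) (hcardV xw hxwA)).2 hVw
    exact Nat.add_lt_add_right h1 _

lemma isDownSet_of_fix {A : Finset (ι → ℤ)} (hfix : ∀ i, ccompress i A = A) :
    IsDownSet A := by
  have H : ∀ N : ℕ, ∀ x y : ι → ℤ, (∑ l : ι, (y l - x l).toNat) ≤ N →
      (∀ l, 0 ≤ x l) → (∀ l, x l ≤ y l) → y ∈ A → x ∈ A := by
    intro N
    induction N with
    | zero =>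
      intro x y hm h0 hle hy
      have hxy : x = y := by
        funext l
        have h1 : (y l - x l).toNat = 0 :=
          Finset.sum_eq_zero_iff.1 (Nat.le_zero.1 hm) l (Finset.mem_univ l)
        have := hle l
        omega
      rwa [hxy]
    | succ N ih =>
      intro x y hm h0 hle hy
      by_cases hxy : x = y
      · rwa [hxy]
      · have hex : ∃ i, x i < y i := by
          by_contra h
          push_neg at h
          exact hxy (funext fun l => le_antisymm (hle l) (h l))
        obtain ⟨i, hi⟩ := hex
        have hyc : y ∈ ccompress i A := by rw [hfix i]; exact hy
        obtain ⟨⟨x₀, hx₀, hyx₀⟩, h0y, hlty⟩ := mem_ccompress.1 hyc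
        have hoff : ∀ j, j ≠ i → Function.update y i (x i) j = y j :=
          fun j hj => Function.update_of_ne hj _ _
        have hy'A : Function.update y i (x i) ∈ A := by
          rw [← hfix i]
          apply mem_ccompress.2
          refine ⟨⟨x₀, hx₀, fun j hj => by rw [hoff j hj]; exact hyx₀ j hj⟩, ?_, ?_⟩
          · rw [Function.update_self]; exact h0 i
          · have hfe : fib i A (Function.update y i (x i)) = fib i A y := fib_congr hoff
            rw [Function.update_self, hfe]
            omega
        apply ih x (Function.update y i (x i)) ?_ h0 ?_ hy'A
        · have h2 : (y i - x i).toNat + ∑ l ∈ Finset.univ.erase i, (y l - x l).toNat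
              = ∑ l : ι, (y l - x l).toNat :=
            Finset.add_sum_erase Finset.univ (fun l => (y l - x l).toNat) (Finset.mem_univ i)
          have h1 : (Function.update y i (x i) i - x i).toNat +
              ∑ l ∈ Finset.univ.erase i, (Function.update y i (x i) l - x l).toNat
              = ∑ l : ι, (Function.update y i (x i) l - x l).toNat :=
            Finset.add_sum_erase Finset.univ
              (fun l => (Function.update y i (x i) l - x l).toNat) (Finset.mem_univ i)
          have heq : ∑ l ∈ Finset.univ.erase i, (Function.update y i (x i) l - x l).toNat
              = ∑ l ∈ Finset.univ.erase i, (y l - x l).toNat := by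
            apply Finset.sum_congr rfl
            intro l hl
            rw [Function.update_of_ne (Finset.mem_erase.1 hl).1]
          have h3 : (Function.update y i (x i) i - x i).toNat = 0 := by
            rw [Function.update_self]
            omega
          omega
        · intro l
          by_cases hl : l = i
          · subst hl; rw [Function.update_self]
          · rw [Function.update_of_ne hl]; exact hle l
  intro x y h0 hle hy
  exact H _ x y le_rfl h0 hle hy

lemma exists_downset_from_X :
    ∀ (N : ℕ) (S : Finset (ι → ℤ)), pot S = N →
    (∀ z ∈ S, (∀ l, 0 ≤ z l) ∧ ∃ l, z l = 0) →
    ∃ D : Finset (ι → ℤ), (∀ z ∈ D, (∀ l, 0 ≤ z l) ∧ ∃ l, z l = 0) ∧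
      D.card = S.card ∧ (∀ i, (proj i D).card ≤ (proj i S).card) ∧ IsDownSet D := by
  intro N
  induction N using Nat.strong_induction_on with
  | _ N ih =>
    intro S hN hX
    by_cases hfix : ∀ i : ι, ccompress i S = S
    · exact ⟨S, hX, rfl, fun i => le_rfl, isDownSet_of_fix hfix⟩
    · push_neg at hfix
      obtain ⟨i, hi⟩ := hfix
      have hnn : ∀ z ∈ S, ∀ l, 0 ≤ z l := fun z hz => (hX z hz).1
      have hlt : pot (ccompress i S) < N := hN ▸ pot_ccompress_lt hnn hi
      obtain ⟨D, hDX, hcard, hproj, hdown⟩ :=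
        ih _ hlt (ccompress i S) rfl (ccompress_X hX)
      refine ⟨D, hDX, hcard.trans (card_ccompress i S), fun j => ?_, hdown⟩
      rcases eq_or_ne j i with rfl | hne
      · exact le_trans (hproj j) (le_of_eq (by rw [proj_ccompress]))
      · exact le_trans (hproj j) (proj_ccompress_le (Ne.symm hne) S)

end CComp2


section Compress

variable [Fintype ι] [DecidableEq ι]

lemma bottomLayer_subset_s7 (i : ι) (A : Finset (ι → ℤ)) : bottomLayer i A ⊆ A :=
  fun x hx => Finset.mem_of_mem_filter x hx

lemma mem_bottomLayer {i : ι} {A : Finset (ι → ℤ)} {x : ι → ℤ} :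
    x ∈ bottomLayer i A ↔
      x ∈ A ∧ ∀ y ∈ A, (∀ j, j ≠ i → y j = x j) → x i ≤ y i :=
  Finset.mem_filter

lemma mem_compress_cases {i : ι} {A : Finset (ι → ℤ)} {z : ι → ℤ}
    (hz : z ∈ compress i A) :
    (z ∈ A ∧ z ∉ bottomLayer i A) ∨ ∃ x ∈ bottomLayer i A, z = Function.update x i 0 := by
  rcases Finset.mem_union.1 hz with h | h
  · exact Or.inl ⟨(Finset.mem_sdiff.1 h).1, (Finset.mem_sdiff.1 h).2⟩
  · obtain ⟨x, hx, rfl⟩ := Finset.mem_image.1 h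
    exact Or.inr ⟨x, hx, rfl⟩

lemma card_compress {i : ι} {A : Finset (ι → ℤ)} (h1 : ∀ z ∈ A, 1 ≤ z i) :
    (compress i A).card = A.card := by
  have hdisj : Disjoint (A \ bottomLayer i A)
      ((bottomLayer i A).image fun x => Function.update x i 0) := by
    refine Finset.disjoint_left.2 fun u hu hu' => ?_
    obtain ⟨x, hx, hux⟩ := Finset.mem_image.1 hu'
    have h0 : u i = 0 := by rw [← hux]; exact Function.update_self ..
    have := h1 u (Finset.mem_sdiff.1 hu).1
    omega
  have hinj : Set.InjOn (fun x => Function.update x i 0)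
      ((bottomLayer i A : Finset (ι → ℤ)) : Set (ι → ℤ)) := by
    intro x hx y hy hxy
    rw [Finset.mem_coe] at hx hy
    obtain ⟨hxA, hxm⟩ := Finset.mem_filter.1 hx
    obtain ⟨hyA, hym⟩ := Finset.mem_filter.1 hy
    have hoff : ∀ j, j ≠ i → x j = y j := by
      intro j hj
      have h := congrFun hxy j
      simp only at h
      rwa [Function.update_of_ne hj, Function.update_of_ne hj] at h
    have hxyi1 : x i ≤ y i := hxm y hyA (fun j hj => (hoff j hj).symm)
    have hxyi2 : y i ≤ x i := hym x hxA (fun j hj => hoff j hj)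
    funext j
    by_cases hj : j = i
    · subst hj; omega
    · exact hoff j hj
  rw [compress, Finset.card_union_of_disjoint hdisj, Finset.card_image_of_injOn hinj]
  exact Finset.card_sdiff_add_card_eq_card (Finset.filter_subset _ _)

lemma proj_compress_self {i : ι} {A : Finset (ι → ℤ)} :
    (proj i (compress i A)).card ≤ (proj i A).card := by
  apply Finset.card_le_card
  intro p hp
  obtain ⟨z, hz, rfl⟩ := Finset.mem_image.1 hp
  rcases mem_compress_cases hz with ⟨hzA, -⟩ | ⟨x, hx, rfl⟩
  · exact Finset.mem_image.2 ⟨z, hzA, rfl⟩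
  · exact Finset.mem_image.2 ⟨x, Finset.filter_subset _ _ hx, (projFun_update ..).symm⟩

lemma proj_compress_le {i j : ι} (hij : i ≠ j) {A : Finset (ι → ℤ)}
    (h1 : ∀ z ∈ A, 1 ≤ z i) :
    (proj j (compress i A)).card ≤ (proj j A).card := by
  classical
  set K : ({l : ι // l ≠ j} → ℤ) → ({l : ι // l ≠ j} → ℤ) :=
    fun q l => if l.1 = i then 0 else q l with hK
  have hKoff : ∀ z w : ι → ℤ, (∀ l, l ≠ i → z l = w l) →
      K (projFun j z) = K (projFun j w) := by
    intro z w h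
    funext l
    by_cases hl : l.1 = i
    · simp only [hK, if_pos hl]
    · simp only [hK, if_neg hl]
      exact h l.1 hl
  have hmemA : ∀ z ∈ compress i A, ∃ x ∈ A, ∀ l, l ≠ i → z l = x l := by
    intro z hz
    rcases mem_compress_cases hz with ⟨hzA, -⟩ | ⟨x, hx, rfl⟩
    · exact ⟨z, hzA, fun _ _ => rfl⟩
    · exact ⟨x, Finset.filter_subset _ _ hx, fun l hl => Function.update_of_ne hl _ _⟩
  apply card_le_of_planes _ _ K
  · intro r hr
    obtain ⟨q, hq, rfl⟩ := Finset.mem_image.1 hr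
    obtain ⟨z, hz, rfl⟩ := Finset.mem_image.1 hq
    obtain ⟨x, hx, hzx⟩ := hmemA z hz
    exact Finset.mem_image.2 ⟨projFun j x, Finset.mem_image.2 ⟨x, hx, rfl⟩,
      (hKoff z x hzx).symm⟩
  · intro r hr
    have hri : r ⟨i, hij⟩ = 0 := by
      obtain ⟨q, -, rfl⟩ := Finset.mem_image.1 hr
      show (if ((⟨i, hij⟩ : {l : ι // l ≠ j})).1 = i then (0:ℤ) else q ⟨i, hij⟩) = 0
      rw [if_pos rfl]
    set oldV := (proj j A).filter (fun q => K q = r) with hOV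
    set newV := (proj j (compress i A)).filter (fun q => K q = r) with hNV
    have hone : oldV.Nonempty := by
      obtain ⟨q, hq, hqr⟩ := Finset.mem_image.1 hr
      obtain ⟨z, hz, rfl⟩ := Finset.mem_image.1 hq
      obtain ⟨x, hx, hzx⟩ := hmemA z hz
      exact ⟨projFun j x, Finset.mem_filter.2 ⟨Finset.mem_image.2 ⟨x, hx, rfl⟩,
        by rw [← hKoff z x hzx]; exact hqr⟩⟩
    set vs := oldV.image (fun q => q ⟨i, hij⟩) with hvs
    have hvsne : vs.Nonempty := hone.image _
    set v := vs.min' hvsne with hv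
    obtain ⟨qs, hqs, hqsv⟩ := Finset.mem_image.1 (vs.min'_mem hvsne)
    rw [← hv] at hqsv
    have hv1 : 1 ≤ v := by
      obtain ⟨hqsm, -⟩ := Finset.mem_filter.1 hqs
      obtain ⟨y, hy, hyq⟩ := Finset.mem_image.1 hqsm
      have he : qs ⟨i, hij⟩ = y i := by rw [← hyq]; rfl
      rw [← hqsv, he]
      exact h1 y hy
    have hKpt : ∀ q : {l : ι // l ≠ j} → ℤ, K q = r →
        ∀ l : {l : ι // l ≠ j}, l.1 ≠ i → q l = r l := by
      intro q hq l hl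
      rw [← hq]
      show q l = if l.1 = i then 0 else q l
      rw [if_neg hl]
    have hqs_not : qs ∉ newV := by
      intro hmem
      obtain ⟨hm1, hm2⟩ := Finset.mem_filter.1 hmem
      obtain ⟨z, hz, hzq⟩ := Finset.mem_image.1 hm1
      have hzi : z i = v := by rw [← hqsv, ← hzq]; rfl
      rcases mem_compress_cases hz with ⟨hzA, hzB⟩ | ⟨x, hx, hzx⟩
      · apply hzB
        refine Finset.mem_filter.2 ⟨hzA, ?_⟩
        intro y hy hyz
        have hKz : K (projFun j z) = r := by rw [hzq]; exact hm2
        have hKy : K (projFun j y) = r := by rw [hKoff y z hyz]; exact hKz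
        have hyo : projFun j y ∈ oldV :=
          Finset.mem_filter.2 ⟨Finset.mem_image.2 ⟨y, hy, rfl⟩, hKy⟩
        have hle : v ≤ projFun j y ⟨i, hij⟩ :=
          vs.min'_le _ (Finset.mem_image.2 ⟨_, hyo, rfl⟩)
        have he : projFun j y ⟨i, hij⟩ = y i := rfl
        rw [he] at hle
        omega
      · have h0 : z i = 0 := by rw [hzx]; exact Function.update_self ..
        omega
    have hsub : newV ⊆ (insert r oldV).erase qs := by
      intro q hq
      refine Finset.mem_erase.2 ⟨fun h => hqs_not (h ▸ hq), ?_⟩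
      obtain ⟨hm1, hm2⟩ := Finset.mem_filter.1 hq
      obtain ⟨z, hz, rfl⟩ := Finset.mem_image.1 hm1
      rcases mem_compress_cases hz with ⟨hzA, -⟩ | ⟨x, hx, hzx⟩
      · exact Finset.mem_insert_of_mem
          (Finset.mem_filter.2 ⟨Finset.mem_image.2 ⟨z, hzA, rfl⟩, hm2⟩)
      · have hzr : projFun j z = r := by
          funext l
          by_cases hl : l.1 = i
          · have hli : l = ⟨i, hij⟩ := Subtype.ext hl
            subst hli
            have h0 : projFun j z ⟨i, hij⟩ = z i := rfl
            rw [h0, hri, hzx]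
            exact Function.update_self ..
          · exact hKpt _ hm2 l hl
        rw [hzr]
        exact Finset.mem_insert_self r oldV
    have hqs_mem : qs ∈ insert r oldV := Finset.mem_insert_of_mem hqs
    calc newV.card ≤ ((insert r oldV).erase qs).card := Finset.card_le_card hsub
      _ = (insert r oldV).card - 1 := Finset.card_erase_of_mem hqs_mem
      _ ≤ oldV.card := by
          have := Finset.card_insert_le r oldV
          omega

end Compress


section FinN

variable {n : ℕ}

lemma compressUpTo_succ (A : Finset (Fin n → ℤ)) (k : ℕ) :
    compressUpTo A (k + 1) =
      if h : k < n then compress ⟨k, h⟩ (compressUpTo A k) else compressUpTo A k := rfl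

lemma cUT_pos (A : Finset (Fin n → ℤ)) (hA : ∀ x ∈ A, ∀ j, 1 ≤ x j) :
    ∀ k, ∀ z ∈ compressUpTo A k, ∀ j : Fin n, k ≤ j.1 → 1 ≤ z j := by
  intro k
  induction k with
  | zero => intro z hz j _; exact hA z hz j
  | succ k ih =>
    intro z hz j hj
    rw [compressUpTo_succ] at hz
    by_cases h : k < n
    · rw [dif_pos h] at hz
      rcases mem_compress_cases hz with ⟨hzS, -⟩ | ⟨x, hx, rfl⟩
      · exact ih z hzS j (by omega)
      · have hxk : x ∈ compressUpTo A k := bottomLayer_subset_s7 _ _ hx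
        have hji : j ≠ (⟨k, h⟩ : Fin n) := by
          intro e
          rw [e] at hj
          simp at hj
        rw [Function.update_of_ne hji]
        exact ih x hxk j (by omega)
    · rw [dif_neg h] at hz
      exact ih z hz j (by omega)

lemma cUT_nonneg (A : Finset (Fin n → ℤ)) (hA : ∀ x ∈ A, ∀ j, 1 ≤ x j) :
    ∀ k, ∀ z ∈ compressUpTo A k, ∀ j : Fin n, 0 ≤ z j := by
  intro k
  induction k with
  | zero => intro z hz j; have := hA z hz j; omega
  | succ k ih =>
    intro z hz j
    rw [compressUpTo_succ] at hz
    by_cases h : k < n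
    · rw [dif_pos h] at hz
      rcases mem_compress_cases hz with ⟨hzS, -⟩ | ⟨x, hx, rfl⟩
      · exact ih z hzS j
      · have hxk : x ∈ compressUpTo A k := bottomLayer_subset_s7 _ _ hx
        by_cases hji : j = (⟨k, h⟩ : Fin n)
        · subst hji; rw [Function.update_self]
        · rw [Function.update_of_ne hji]; exact ih x hxk j
    · rw [dif_neg h] at hz
      exact ih z hz j

lemma cUT_card (A : Finset (Fin n → ℤ)) (hA : ∀ x ∈ A, ∀ j, 1 ≤ x j) :
    ∀ k, (compressUpTo A k).card = A.card := by
  intro k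
  induction k with
  | zero => rfl
  | succ k ih =>
    rw [compressUpTo_succ]
    by_cases h : k < n
    · rw [dif_pos h, card_compress, ih]
      intro z hz
      exact cUT_pos A hA k z hz ⟨k, h⟩ le_rfl
    · rw [dif_neg h, ih]

lemma cUT_proj (A : Finset (Fin n → ℤ)) (hA : ∀ x ∈ A, ∀ j, 1 ≤ x j) :
    ∀ k, ∀ i : Fin n, (proj i (compressUpTo A k)).card ≤ (proj i A).card := by
  intro k
  induction k with
  | zero => intro i; exact le_rfl
  | succ k ih =>
    intro i
    rw [compressUpTo_succ]
    by_cases h : k < n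
    · rw [dif_pos h]
      have hpos : ∀ z ∈ compressUpTo A k, 1 ≤ z ⟨k, h⟩ :=
        fun z hz => cUT_pos A hA k z hz ⟨k, h⟩ le_rfl
      rcases eq_or_ne i (⟨k, h⟩ : Fin n) with rfl | hne
      · exact le_trans proj_compress_self (ih ⟨k, h⟩)
      · exact le_trans (proj_compress_le (Ne.symm hne) hpos) (ih i)
    · rw [dif_neg h]
      exact ih i

lemma cUT_key (A : Finset (Fin n → ℤ)) (hA : ∀ x ∈ A, ∀ j, 1 ≤ x j) :
    ∀ k, ∀ v ∈ compressUpTo A k, (∀ j, 1 ≤ v j) →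
      v ∈ A ∧ ∃ z ∈ A, (∀ j : Fin n, j.1 < k → z j < v j) ∧
        (∀ j : Fin n, k ≤ j.1 → z j = v j) := by
  intro k
  induction k with
  | zero =>
    intro v hv _
    exact ⟨hv, v, hv, fun j hj => absurd hj (by omega), fun j _ => rfl⟩
  | succ k ih =>
    intro v hv hv1
    rw [compressUpTo_succ] at hv
    by_cases h : k < n
    · rw [dif_pos h] at hv
      set S := compressUpTo A k with hS
      have hvS : v ∈ S ∧ v ∉ bottomLayer ⟨k, h⟩ S := by
        rcases mem_compress_cases hv with h' | ⟨x, hx, hvx⟩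
        · exact h'
        · exfalso
          have : v ⟨k, h⟩ = 0 := by rw [hvx]; exact Function.update_self ..
          have := hv1 ⟨k, h⟩
          omega
      have hnot : ¬ ∀ y ∈ S, (∀ j₂ : Fin n, j₂ ≠ ⟨k, h⟩ → y j₂ = v j₂) →
          v ⟨k, h⟩ ≤ y ⟨k, h⟩ := by
        intro hall
        exact hvS.2 (mem_bottomLayer.2 ⟨hvS.1, hall⟩)
      push_neg at hnot
      obtain ⟨w, hwS, hwv, hwk⟩ := hnot
      have hw1 : ∀ j, 1 ≤ w j := by
        intro j
        by_cases hj : j = (⟨k, h⟩ : Fin n)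
        · subst hj; exact cUT_pos A hA k w hwS _ le_rfl
        · rw [hwv j hj]; exact hv1 j
      obtain ⟨hwA, z, hzA, hzlt, hzeq⟩ := ih w hwS hw1
      have hvA : v ∈ A := (ih v hvS.1 hv1).1
      refine ⟨hvA, z, hzA, ?_, ?_⟩
      · intro j hj
        by_cases hjk : j.1 < k
        · have hjne : j ≠ (⟨k, h⟩ : Fin n) := by
            intro e; rw [e] at hjk; simp at hjk
          rw [← hwv j hjne]
          exact hzlt j hjk
        · have hjv : j.1 = k := by omega
          have hjk' : j = (⟨k, h⟩ : Fin n) := Fin.ext hjv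
          have h1 : z j = w j := hzeq j (by omega)
          rw [h1, hjk']
          exact hwk
      · intro j hj
        have hjne : j ≠ (⟨k, h⟩ : Fin n) := by
          intro e
          rw [e] at hj
          have hcon : k + 1 ≤ k := by simpa using hj
          omega
        rw [← hwv j hjne]
        exact hzeq j (by omega)
    · rw [dif_neg h] at hv
      obtain ⟨hvA, z, hzA, hzlt, hzeq⟩ := ih v hv hv1
      refine ⟨hvA, z, hzA, ?_, fun j hj => hzeq j (by omega)⟩
      intro j hj
      exact hzlt j (by have := j.2; omega)

lemma cUT_X (A : Finset (Fin n → ℤ)) (hA : ∀ x ∈ A, ∀ j, 1 ≤ x j)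
    (hWA : IsWeakAntichain A) :
    ∀ z ∈ compressUpTo A n, (∀ l, 0 ≤ z l) ∧ ∃ l, z l = 0 := by
  intro z hz
  refine ⟨cUT_nonneg A hA n z hz, ?_⟩
  by_contra hno
  push_neg at hno
  have hz1 : ∀ j, 1 ≤ z j := by
    intro j
    have h0 := cUT_nonneg A hA n z hz j
    have h1 := hno j
    omega
  obtain ⟨hzA, z', hz'A, hlt, -⟩ := cUT_key A hA n z hz hz1
  exact hWA z' hz'A z hzA (fun j => hlt j j.2)

lemma exists_shift (A : Finset (Fin n → ℤ)) (hWA : IsWeakAntichain A) :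
    ∃ A₁ : Finset (Fin n → ℤ), IsWeakAntichain A₁ ∧ A₁.card = A.card ∧
      (∀ i, (proj i A₁).card = (proj i A).card) ∧ ∀ x ∈ A₁, ∀ j, 1 ≤ x j := by
  classical
  obtain ⟨c, hcb⟩ : ∃ c : ℤ, ∀ x ∈ A, ∀ j, 1 ≤ x j + c := by
    refine ⟨1 + ((A.sup fun x => Finset.univ.sup fun j => (-(x j)).toNat : ℕ) : ℤ), ?_⟩
    intro x hx j
    have h1 : (-(x j)).toNat ≤ A.sup fun x => Finset.univ.sup fun j => (-(x j)).toNat :=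
      le_trans (Finset.le_sup (f := fun j => (-(x j)).toNat) (Finset.mem_univ j))
        (Finset.le_sup (f := fun x => Finset.univ.sup fun j => (-(x j)).toNat) hx)
    have h2 : -(x j) ≤ ((A.sup fun x => Finset.univ.sup fun j => (-(x j)).toNat : ℕ) : ℤ) :=
      le_trans (Int.self_le_toNat _) (by exact_mod_cast h1)
    linarith
  have hshiftinj : Function.Injective (fun (x : Fin n → ℤ) => fun j => x j + c) := by
    intro x y h
    funext j
    have h2 : x j + c = y j + c := congrFun h j
    omega
  refine ⟨A.image (fun x => fun j => x j + c), ?_, ?_, ?_, ?_⟩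
  · intro x hx y hy hlt
    obtain ⟨x₀, hx₀, rfl⟩ := Finset.mem_image.1 hx
    obtain ⟨y₀, hy₀, rfl⟩ := Finset.mem_image.1 hy
    apply hWA x₀ hx₀ y₀ hy₀
    intro i
    have h2 : x₀ i + c < y₀ i + c := hlt i
    omega
  · exact Finset.card_image_of_injective A hshiftinj
  · intro i
    have himg : proj i (A.image (fun x => fun j => x j + c)) =
        (proj i A).image (fun p => fun l => p l + c) := by
      show (A.image (fun x => fun j => x j + c)).image (projFun i) =
        (A.image (projFun i)).image (fun p => fun l => p l + c)
      rw [Finset.image_image, Finset.image_image]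
      rfl
    rw [himg]
    apply Finset.card_image_of_injective
    intro p q h
    funext l
    have h2 : p l + c = q l + c := congrFun h l
    omega
  · intro x hx j
    obtain ⟨x₀, hx₀, rfl⟩ := Finset.mem_image.1 hx
    show 1 ≤ x₀ j + c
    exact hcb x₀ hx₀ j

end FinN

/-- For every finite weak antichain `A ⊆ ℤ^n` there is a set `A' ⊆ X_n` of
the same size with `|π_i(A')| ≤ |π_i(A)|` for each `i` which is a down-set (and in
particular a weak antichain). -/
theorem exists_downSet_in_X (n : ℕ) (A : Finset (Fin n → ℤ)) (hA : IsWeakAntichain A) :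
    ∃ A' : Finset (Fin n → ℤ), ↑A' ⊆ XSet (Fin n) ∧ A'.card = A.card ∧
      (∀ i : Fin n, (proj i A').card ≤ (proj i A).card) ∧
      IsDownSet A' ∧ IsWeakAntichain A' := by
  classical
  obtain ⟨A₁, hWA1, hcard1, hproj1, hpos1⟩ := exists_shift A hA
  have hTX : ∀ z ∈ compressUpTo A₁ n, (∀ l, 0 ≤ z l) ∧ ∃ l, z l = 0 :=
    cUT_X A₁ hpos1 hWA1
  obtain ⟨D, hDX, hDcard, hDproj, hDdown⟩ :=
    exists_downset_from_X (pot (compressUpTo A₁ n)) (compressUpTo A₁ n) rfl hTX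
  have hDX' : ↑D ⊆ XSet (Fin n) := by
    intro z hz
    exact hDX z (Finset.mem_coe.1 hz)
  refine ⟨D, hDX', ?_, ?_, hDdown, ?_⟩
  · rw [hDcard, cUT_card A₁ hpos1 n, hcard1]
  · intro i
    exact le_trans (hDproj i) (le_trans (cUT_proj A₁ hpos1 n i) (le_of_eq (hproj1 i)))
  · intro x hx y hy hlt
    obtain ⟨hynn, l, hl⟩ := hDX y hy
    have h1 := (hDX x hx).1 l
    have h2 := hlt l
    omega

end ProjWA
end

section
/- Let A ⊆ ℤ_{≥0}^n be any finite set and let C_i denote the i-compression. For every i ≠ j, π_j(C_i(A)) ⊆ C_i(π_j(A)), where the compression of π_j(A) is along the coordinate labelled by i. In particular, |π_j(C_i(A))| ≤ |π_j(A)|. -/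
namespace ProjWA

variable {ι : Type*}

/-- For any finite `A ⊆ ℤ_{≥0}^n` and `i ≠ j`, one has
`π_j(C_i(A)) ⊆ C_i(π_j(A))` (compressing `π_j(A)` along the coordinate labelled `i`);
in particular `|π_j(C_i(A))| ≤ |π_j(A)|`. -/
theorem proj_compress_subset (n : ℕ) (A : Finset (Fin n → ℤ))
    (hA : ∀ x ∈ A, ∀ i, 0 ≤ x i) (i j : Fin n) (hij : i ≠ j) :
    proj j (compress i A) ⊆ compress (⟨i, hij⟩ : {k : Fin n // k ≠ j}) (proj j A) ∧
      (proj j (compress i A)).card ≤ (proj j A).card := by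

  have key : proj j (compress i A) ⊆ compress (⟨i, hij⟩ : {k : Fin n // k ≠ j}) (proj j A) := by
    intro p hp
    simp only [proj, Finset.mem_image] at hp
    obtain ⟨x, hx, rfl⟩ := hp
    simp only [compress, Finset.mem_union, Finset.mem_sdiff, Finset.mem_image] at hx ⊢
    rcases hx with ⟨hxA, hxB⟩ | ⟨z, hz, rfl⟩
    · left
      have hmemA : projFun j x ∈ proj j A := Finset.mem_image_of_mem (projFun j) hxA
      refine ⟨hmemA, ?_⟩
      intro hmem
      simp only [bottomLayer, Finset.mem_filter] at hmem
      apply hxB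
      simp only [bottomLayer, Finset.mem_filter]
      refine ⟨hxA, fun y hy hyk => ?_⟩
      have hyp : projFun j y ∈ proj j A := Finset.mem_image_of_mem (projFun j) hy
      exact hmem.2 (projFun j y) hyp fun k hk => hyk k.1 (fun he => hk (Subtype.ext he))
    · right
      have hzA : z ∈ A := by simp only [bottomLayer, Finset.mem_filter] at hz; exact hz.1
      have hπz : projFun j z ∈ proj j A := Finset.mem_image_of_mem _ hzA
      obtain ⟨v, hv, hvmin⟩ := Finset.exists_min_image
        ((proj j A).filter fun y => ∀ k, k ≠ (⟨i, hij⟩ : {k : Fin n // k ≠ j}) →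
          y k = projFun j z k)
        (fun y => y ⟨i, hij⟩)
        ⟨projFun j z, Finset.mem_filter.mpr ⟨hπz, fun _ _ => rfl⟩⟩
      obtain ⟨hv1, hv2⟩ := Finset.mem_filter.mp hv
      refine ⟨v, ?_, ?_⟩
      · simp only [bottomLayer, Finset.mem_filter]
        refine ⟨hv1, fun y hy hyk => ?_⟩
        exact hvmin y (Finset.mem_filter.mpr ⟨hy, fun k hk => (hyk k hk).trans (hv2 k hk)⟩)
      · funext k
        by_cases hk : k = (⟨i, hij⟩ : {k : Fin n // k ≠ j})
        · subst hk
          simp [projFun, Function.update_self]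
        · have hki : k.1 ≠ i := fun he => hk (Subtype.ext he)
          rw [Function.update_of_ne hk, hv2 k hk]
          simp [projFun, Function.update_of_ne hki]
  refine ⟨key, ?_⟩
  calc (proj j (compress i A)).card
      ≤ (compress (⟨i, hij⟩ : {k : Fin n // k ≠ j}) (proj j A)).card :=
        Finset.card_le_card key
    _ ≤ (proj j A).card := by
        rw [compress]
        refine (Finset.card_union_le _ _).trans ?_
        have h1 := Finset.card_image_le
          (s := bottomLayer (⟨i, hij⟩ : {k : Fin n // k ≠ j}) (proj j A))
          (f := fun x => Function.update x (⟨i, hij⟩ : {k : Fin n // k ≠ j}) 0)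
        have h2 : bottomLayer (⟨i, hij⟩ : {k : Fin n // k ≠ j}) (proj j A) ⊆ proj j A :=
          Finset.filter_subset _ _
        have h3 := Finset.card_sdiff_add_card_eq_card h2
        omega

end ProjWA
end

section
/- The balanced order is a strict total order on X_n: for all distinct x, y ∈ X_n exactly one of x < y, y < x holds, and the relation is transitive. -/
namespace ProjWA

variable {ι : Type*}

section BalancedAux

variable [Fintype ι] [LinearOrder ι]

open Finset Finset.Colex

lemma diffSet_comm (x y : ι → ℤ) : diffSet x y = diffSet y x := by
  simp [diffSet, ne_comm]

lemma mem_diffSet {x y : ι → ℤ} {i : ι} : i ∈ diffSet x y ↔ x i ≠ y i := by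
  simp [diffSet]

lemma diffSet_nonempty {x y : ι → ℤ} (h : x ≠ y) : (diffSet x y).Nonempty := by
  rw [Function.ne_iff] at h
  obtain ⟨i, hi⟩ := h
  exact ⟨i, mem_diffSet.2 hi⟩

lemma le_maxOn {s : Finset ι} {x : ι → ℤ} {i : ι} (hi : i ∈ s) :
    (x i : WithBot ℤ) ≤ maxOn s x :=
  Finset.le_max (Finset.mem_image_of_mem x hi)

lemma le_argmaxOn {s : Finset ι} {x : ι → ℤ} {i : ι} (hi : i ∈ s)
    (h : (x i : WithBot ℤ) = maxOn s x) : (i : WithBot ι) ≤ argmaxOn s x :=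
  Finset.le_max (Finset.mem_filter.2 ⟨hi, h⟩)

lemma argmaxOn_spec {s : Finset ι} {x : ι → ℤ} (hs : s.Nonempty) :
    ∃ j ∈ s, argmaxOn s x = (j : WithBot ι) ∧ (x j : WithBot ℤ) = maxOn s x := by
  obtain ⟨m, hm⟩ := Finset.max_of_nonempty (hs.image x)
  obtain ⟨i0, hi0, hxi0⟩ := Finset.mem_image.1 (Finset.mem_of_max hm)
  have hne : (s.filter fun i => (x i : WithBot ℤ) = maxOn s x).Nonempty :=
    ⟨i0, Finset.mem_filter.2 ⟨hi0, by rw [maxOn, hm, hxi0]⟩⟩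
  obtain ⟨j, hj⟩ := Finset.max_of_nonempty hne
  have hjm := Finset.mem_of_max hj
  rw [Finset.mem_filter] at hjm
  exact ⟨j, hjm.1, hj, hjm.2⟩

/-- The colex key of a point: the set of pairs `(x i, i)` ordered lexicographically. -/
def keyset (x : ι → ℤ) : Finset (Lex (ℤ × ι)) :=
  Finset.univ.image fun i => toLex (x i, i)

lemma mem_keyset {x : ι → ℤ} {a : ℤ} {i : ι} : toLex (a, i) ∈ keyset x ↔ x i = a := by
  constructor
  · intro h
    obtain ⟨j, -, hj⟩ := Finset.mem_image.1 h
    have hj' : (x j, j) = (a, i) := toLex.injective hj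
    obtain ⟨h1, h2⟩ := Prod.mk.injEq .. ▸ hj'
    subst h2; exact h1
  · intro h
    exact Finset.mem_image.2 ⟨i, Finset.mem_univ i, by rw [h]⟩

lemma key_lt_of_balancedLT {x y : ι → ℤ} (h : balancedLT x y) :
    toColex (keyset x) < toColex (keyset y) := by
  obtain ⟨hne, hlt⟩ := h
  set T := diffSet x y with hT
  have hTne := diffSet_nonempty hne
  obtain ⟨j, hjT, hjam, hjm⟩ := argmaxOn_spec (x := y) hTne
  refine Finset.Colex.toColex_lt_toColex_iff_exists_forall_lt.2 ⟨toLex (y j, j), mem_keyset.2 rfl,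
    fun hmem => (mem_diffSet.1 hjT) (mem_keyset.1 hmem), ?_⟩
  intro b hb hbns
  obtain ⟨i, -, rfl⟩ := Finset.mem_image.1 hb
  have hiT : i ∈ T := mem_diffSet.2 fun hxy => hbns (mem_keyset.2 hxy.symm)
  rw [Prod.Lex.lt_iff]
  have h1 : (x i : WithBot ℤ) ≤ maxOn T x := le_maxOn hiT
  rcases hlt with hlt | ⟨heq, harg⟩
  · left
    have : (x i : WithBot ℤ) < (y j : WithBot ℤ) := h1.trans_lt (hlt.trans_eq hjm.symm)
    exact_mod_cast this
  · have h2 : (x i : WithBot ℤ) ≤ (y j : WithBot ℤ) := h1.trans (heq.trans hjm.symm).le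
    rcases lt_or_eq_of_le (show x i ≤ y j by exact_mod_cast h2) with h3 | h3
    · exact Or.inl h3
    · right
      refine ⟨h3, ?_⟩
      have h4 : (x i : WithBot ℤ) = maxOn T x := by rw [h3, hjm, heq]
      have h5 : (i : WithBot ι) ≤ argmaxOn T x := le_argmaxOn hiT h4
      have : (i : WithBot ι) < (j : WithBot ι) := h5.trans_lt (harg.trans_eq hjam)
      exact_mod_cast this

lemma balancedLT_or {x y : ι → ℤ} (hne : x ≠ y) : balancedLT x y ∨ balancedLT y x := by
  have hsym : diffSet y x = diffSet x y := diffSet_comm y x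
  set T := diffSet x y with hT
  have hTne := diffSet_nonempty hne
  rcases lt_trichotomy (maxOn T x) (maxOn T y) with h | h | h
  · exact Or.inl ⟨hne, Or.inl h⟩
  · obtain ⟨jx, hjxT, hjx, hjxm⟩ := argmaxOn_spec (x := x) hTne
    obtain ⟨jy, hjyT, hjy, hjym⟩ := argmaxOn_spec (x := y) hTne
    have hne2 : argmaxOn T x ≠ argmaxOn T y := by
      intro he
      rw [hjx, hjy] at he
      have hjj : jx = jy := by exact_mod_cast he
      subst hjj
      have hxy : (x jx : WithBot ℤ) = (y jx : WithBot ℤ) := by rw [hjxm, hjym, h]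
      exact mem_diffSet.1 hjxT (by exact_mod_cast hxy)
    rcases hne2.lt_or_gt with h2 | h2
    · exact Or.inl ⟨hne, Or.inr ⟨h, h2⟩⟩
    · exact Or.inr ⟨hne.symm, Or.inr ⟨by rw [hsym]; exact h.symm, by rw [hsym]; exact h2⟩⟩
  · exact Or.inr ⟨hne.symm, Or.inl (by rw [hsym]; exact h)⟩

lemma balancedLT_asymm {x y : ι → ℤ} (h : balancedLT x y) : ¬ balancedLT y x := fun h' =>
  absurd (key_lt_of_balancedLT h') (not_lt_of_gt (key_lt_of_balancedLT h))

end BalancedAux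

/-- The balanced order is a strict total order on `X_n`: for distinct
`x, y ∈ X_n` exactly one of `x < y`, `y < x` holds, and the relation is transitive. -/
theorem balancedLT_total_order (n : ℕ) :
    (∀ x ∈ XSet (Fin n), ∀ y ∈ XSet (Fin n), x ≠ y →
        Xor' (balancedLT x y) (balancedLT y x)) ∧
    (∀ x ∈ XSet (Fin n), ∀ y ∈ XSet (Fin n), ∀ z ∈ XSet (Fin n),
        balancedLT x y → balancedLT y z → balancedLT x z) := by
  constructor
  · intro x _ y _ hne
    rcases balancedLT_or hne with h | h
    · exact Or.inl ⟨h, balancedLT_asymm h⟩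
    · exact Or.inr ⟨h, balancedLT_asymm h⟩
  · intro x _ y _ z _ hxy hyz
    have k1 := key_lt_of_balancedLT hxy
    have k2 := key_lt_of_balancedLT hyz
    have hxz : x ≠ z := by
      rintro rfl
      exact absurd (k1.trans k2) (lt_irrefl _)
    rcases balancedLT_or hxz with h | h
    · exact h
    · exact absurd (key_lt_of_balancedLT h) (not_lt_of_gt (k1.trans k2))

end ProjWA
end
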